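/- Let Λ be an integrable real random variable on a probability space, and let r ≠ 0 be a real number such that exp(−r·Λ) is integrable. Then the Bayes estimator under the Linex loss, δ_L = −(1/r)·log E[exp(−r·Λ)], is the unique minimizer over δ ∈ ℝ of the posterior expected loss δ ↦ E[exp(r·(δ − Λ)) − r·(δ − Λ) − 1]. -/

import Mathlib

open MeasureTheory

lemma integral_linex_aux {Ω : Type*} [MeasurableSpace Ω]
    (μ : Measure Ω) [IsProbabilityMeasure μ] (Λ : Ω → ℝ) (r δ : ℝ)
    (hintΛ : Integrable Λ μ)
    (hintexp : Integrable (fun ω => Real.exp (-r * Λ ω)) μ) :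
    ∫ ω, Real.exp (r * (δ - Λ ω)) - r * (δ - Λ ω) - 1 ∂μ
      = Real.exp (r * δ) * (∫ ω, Real.exp (-r * Λ ω) ∂μ)
        - (r * δ - r * ∫ ω, Λ ω ∂μ + 1) := by
  have h1 : (fun ω => Real.exp (r * (δ - Λ ω)) - r * (δ - Λ ω) - 1)
      = fun ω => Real.exp (r * δ) * Real.exp (-r * Λ ω) - (r * δ - r * Λ ω + 1) := by
    funext ω
    rw [← Real.exp_add]
    ring_nf
  have hint2 : Integrable (fun ω => r * δ - r * Λ ω + 1) μ :=
    ((integrable_const (r * δ)).sub (hintΛ.const_mul r)).add (integrable_const 1)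
  rw [h1, integral_sub (hintexp.const_mul _) hint2, integral_const_mul]
  have h2 : (fun ω => r * δ - r * Λ ω + 1) = fun ω => (r * δ + 1) - r * Λ ω := by
    funext ω; ring
  rw [h2, integral_sub (integrable_const _) (hintΛ.const_mul r), integral_const_mul,
    integral_const]
  simp
  ring

/-- Under the Linex loss `L(λ, δ) = exp(r(δ - λ)) - r(δ - λ) - 1`, the Bayes estimator
`δ_L = -(1/r) log E[exp(-r Λ)]` is the unique minimizer of the posterior expected loss. -/
theorem bayes_estimator_linex {Ω : Type*} [MeasurableSpace Ω]
    (μ : Measure Ω) [IsProbabilityMeasure μ] (Λ : Ω → ℝ) (r : ℝ) (hr : r ≠ 0)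
    (hintΛ : Integrable Λ μ)
    (hintexp : Integrable (fun ω => Real.exp (-r * Λ ω)) μ) :
    ∀ δ : ℝ, δ ≠ -(1 / r) * Real.log (∫ ω, Real.exp (-r * Λ ω) ∂μ) →
      (∫ ω, Real.exp (r * (-(1 / r) * Real.log (∫ ω', Real.exp (-r * Λ ω') ∂μ) - Λ ω))
          - r * (-(1 / r) * Real.log (∫ ω', Real.exp (-r * Λ ω') ∂μ) - Λ ω) - 1 ∂μ)
        < ∫ ω, Real.exp (r * (δ - Λ ω)) - r * (δ - Λ ω) - 1 ∂μ := by
  intro δ hδ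
  set I : ℝ := ∫ ω, Real.exp (-r * Λ ω) ∂μ with hIdef
  have hI : 0 < I := integral_exp_pos hintexp
  set δ₀ : ℝ := -(1 / r) * Real.log I with hδ₀def
  rw [integral_linex_aux μ Λ r δ₀ hintΛ hintexp, integral_linex_aux μ Λ r δ hintΛ hintexp]
  have hrδ₀ : r * δ₀ = -Real.log I := by
    rw [hδ₀def, ← mul_assoc, mul_neg, mul_one_div_cancel hr, neg_one_mul]
  have h1 : Real.exp (r * δ₀) * I = 1 := by
    rw [hrδ₀, Real.exp_neg, Real.exp_log hI, inv_mul_cancel₀ hI.ne']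
  have h2 : Real.exp (r * δ) * I = Real.exp (r * δ - r * δ₀) := by
    rw [hrδ₀, Real.exp_sub, Real.exp_neg, Real.exp_log hI]
    field_simp
  have hx : r * δ - r * δ₀ ≠ 0 := by
    intro h
    apply hδ
    have : δ = δ₀ := by
      have := sub_eq_zero.mp h
      exact mul_left_cancel₀ hr this
    exact this
  have h3 : (r * δ - r * δ₀) + 1 < Real.exp (r * δ - r * δ₀) := Real.add_one_lt_exp hx
  rw [h1, h2]
  linarith
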